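/- Let n ≥ 1 be a natural number and let a > n be a real number. Then there exist constants 0 < c ≤ C (depending only on n and a) such that for every ρ > 0 and every r ∈ (0, ρ], c·r^{n−a} ≤ ∫_{B_ρ(0) ∩ {z : z_n > 0}} |z + r e_n|^{−a} dz ≤ C·r^{n−a}. -/

import Mathlib

open MeasureTheory

open Metric Set Pointwise in
private theorem aux_halfball (n : ℕ) (i : Fin n) (a : ℝ) (ha : (n : ℝ) < a) :
    ∃ c C : ℝ, 0 < c ∧ c ≤ C ∧ ∀ ρ r : ℝ, 0 < ρ → 0 < r → r ≤ ρ →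
      c * r ^ ((n : ℝ) - a) ≤
        (∫ z in Metric.ball (0 : EuclideanSpace ℝ (Fin n)) ρ ∩
            {z : EuclideanSpace ℝ (Fin n) | 0 < z i},
          ‖z + r • EuclideanSpace.single i (1 : ℝ)‖ ^ (-a)) ∧
      (∫ z in Metric.ball (0 : EuclideanSpace ℝ (Fin n)) ρ ∩
            {z : EuclideanSpace ℝ (Fin n) | 0 < z i},
          ‖z + r • EuclideanSpace.single i (1 : ℝ)‖ ^ (-a)) ≤
        C * r ^ ((n : ℝ) - a) := by
  classical
  have ha0 : 0 < a := lt_of_le_of_lt (by positivity) ha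
  set e : EuclideanSpace ℝ (Fin n) := EuclideanSpace.single i (1 : ℝ) with he
  set H : Set (EuclideanSpace ℝ (Fin n)) := {z : EuclideanSpace ℝ (Fin n) | 0 < z i} with hHdef
  set h : EuclideanSpace ℝ (Fin n) → ℝ := fun y => ‖y + e‖ ^ (-a) with hhdef
  have hek : e i = 1 := by simp [he, EuclideanSpace.single_apply]
  have hHopen : IsOpen H := isOpen_lt continuous_const (EuclideanSpace.proj i).continuous
  have hHmeas : MeasurableSet H := hHopen.measurableSet
  have hne : ‖e‖ = 1 := by simp [he]
  -- square bound
  have hsq : ∀ y : EuclideanSpace ℝ (Fin n), y ∈ H → 1 + ‖y‖ ^ 2 ≤ ‖y + e‖ ^ 2 := by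
    intro y hy
    have hinner : (inner ℝ y e : ℝ) = y i := by
      simp [he, EuclideanSpace.inner_single_right]
    have hexp := norm_add_sq_real y e
    have hyi : 0 < y i := hy
    nlinarith [hexp]
  have hone : ∀ y ∈ H, (1 : ℝ) ≤ ‖y + e‖ := by
    intro y hy
    nlinarith [hsq y hy, norm_nonneg (y + e), sq_nonneg ‖y‖]
  have hnonneg : ∀ y, 0 ≤ h y := fun y => Real.rpow_nonneg (norm_nonneg _) _
  -- pointwise bound on H
  have hbound : ∀ y ∈ H, h y ≤ Real.sqrt 2 ^ a * (1 + ‖y‖) ^ (-a) := by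
    intro y hy
    have h2 : (1 + ‖y‖) / Real.sqrt 2 ≤ ‖y + e‖ := by
      rw [div_le_iff₀ (by positivity)]
      have h22 : Real.sqrt 2 ^ 2 = 2 := Real.sq_sqrt (by norm_num)
      have hs : (1 + ‖y‖) ^ 2 ≤ (‖y + e‖ * Real.sqrt 2) ^ 2 := by
        have := hsq y hy
        nlinarith [sq_nonneg (1 - ‖y‖)]
      exact (pow_le_pow_iff_left₀ (by positivity) (by positivity) two_ne_zero).mp hs
    calc h y ≤ ((1 + ‖y‖) / Real.sqrt 2) ^ (-a) :=
          Real.rpow_le_rpow_of_nonpos (by positivity) h2 (by linarith)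
      _ = Real.sqrt 2 ^ a * (1 + ‖y‖) ^ (-a) := by
          rw [Real.div_rpow (by positivity) (Real.sqrt_nonneg 2),
            Real.rpow_neg (Real.sqrt_nonneg 2), div_inv_eq_mul, mul_comm]
  have hmeas : Measurable h := by fun_prop
  have hInt1 : Integrable (fun y : EuclideanSpace ℝ (Fin n) =>
      Real.sqrt 2 ^ a * (1 + ‖y‖) ^ (-a)) :=
    (integrable_one_add_norm (by rw [finrank_euclideanSpace_fin]; exact ha)).const_mul _
  have hIntH : IntegrableOn h H := by
    refine Integrable.mono' hInt1.integrableOn hmeas.aestronglyMeasurable.restrict ?_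
    filter_upwards [ae_restrict_mem hHmeas] with y hy
    rw [Real.norm_eq_abs, abs_of_nonneg (hnonneg y)]
    exact hbound y hy
  have hIntS : ∀ s : Set (EuclideanSpace ℝ (Fin n)), IntegrableOn h (s ∩ H) :=
    fun s => hIntH.mono_set inter_subset_right
  set J : ℝ → ℝ := fun t => ∫ y in ball (0 : EuclideanSpace ℝ (Fin n)) t ∩ H, h y with hJdef
  set C : ℝ := ∫ y in H, h y with hCdef
  have hJle : ∀ t, J t ≤ C := fun t =>
    setIntegral_mono_set hIntH (Filter.Eventually.of_forall hnonneg)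
      inter_subset_right.eventuallyLE
  have hJmono : ∀ t1 t2 : ℝ, t1 ≤ t2 → J t1 ≤ J t2 := fun t1 t2 h12 =>
    setIntegral_mono_set (hIntS _) (Filter.Eventually.of_forall hnonneg)
      (inter_subset_inter_left _ (Metric.ball_subset_ball h12)).eventuallyLE
  have hsub : ball (0 : EuclideanSpace ℝ (Fin n)) 1 ∩ H ⊆ Function.support h := by
    intro y hy
    exact ne_of_gt (Real.rpow_pos_of_pos (lt_of_lt_of_le one_pos (hone y hy.2)) _)
  have hpos : 0 < volume (ball (0 : EuclideanSpace ℝ (Fin n)) 1 ∩ H) := by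
    refine (isOpen_ball.inter hHopen).measure_pos volume ⟨(1/2 : ℝ) • e, ?_, ?_⟩
    · rw [mem_ball_zero_iff, norm_smul, hne]
      norm_num
    · show 0 < ((1/2 : ℝ) • e) i
      rw [PiLp.smul_apply, hek, smul_eq_mul]
      norm_num
  have hcpos : 0 < J 1 := by
    rw [hJdef]
    rw [setIntegral_pos_iff_support_of_nonneg_ae (Filter.Eventually.of_forall hnonneg)
      (hIntS _)]
    exact hpos.trans_le (measure_mono fun y hy => ⟨hsub hy, hy⟩)
  -- the scaling identity
  have key : ∀ ρ r : ℝ, 0 < r →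
      (∫ z in ball (0 : EuclideanSpace ℝ (Fin n)) ρ ∩ H, ‖z + r • e‖ ^ (-a))
        = r ^ ((n : ℝ) - a) * J (ρ / r) := by
    intro ρ r hr
    have hset : r • (ball (0 : EuclideanSpace ℝ (Fin n)) (ρ / r) ∩ H)
        = ball (0 : EuclideanSpace ℝ (Fin n)) ρ ∩ H := by
      rw [Set.smul_set_inter₀ hr.ne']
      congr 1
      · rw [smul_ball hr.ne' (0 : EuclideanSpace ℝ (Fin n)) (ρ / r), smul_zero,
          Real.norm_eq_abs, abs_of_pos hr, mul_div_cancel₀ _ hr.ne']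
      · ext z
        rw [mem_smul_set_iff_inv_smul_mem₀ hr.ne']
        show 0 < (r⁻¹ • z) i ↔ 0 < z i
        rw [PiLp.smul_apply, smul_eq_mul]
        constructor
        · intro hz
          have := mul_pos hr hz
          rwa [mul_inv_cancel_left₀ hr.ne'] at this
        · intro hz; positivity
    have hint := Measure.setIntegral_comp_smul_of_pos (volume : Measure (EuclideanSpace ℝ (Fin n)))
      (fun z => ‖z + r • e‖ ^ (-a)) (ball (0 : EuclideanSpace ℝ (Fin n)) (ρ / r) ∩ H) hr
    rw [hset, finrank_euclideanSpace_fin] at hint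
    have hlhs : (∫ y in ball (0 : EuclideanSpace ℝ (Fin n)) (ρ / r) ∩ H,
        ‖r • y + r • e‖ ^ (-a)) = r ^ (-a) * J (ρ / r) := by
      rw [hJdef, ← integral_const_mul]
      refine setIntegral_congr_fun ((isOpen_ball.inter hHopen).measurableSet) fun y _ => ?_
      rw [← smul_add, norm_smul, Real.norm_eq_abs, abs_of_pos hr,
        Real.mul_rpow hr.le (norm_nonneg _)]
    rw [hlhs, smul_eq_mul] at hint
    have hrn : (0 : ℝ) < r ^ n := pow_pos hr n
    have hrp : (r : ℝ) ^ n * r ^ (-a) = r ^ ((n : ℝ) - a) := by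
      rw [← Real.rpow_natCast r n, ← Real.rpow_add hr, sub_eq_add_neg]
    have : (r : ℝ) ^ n * (r ^ (-a) * J (ρ / r))
        = ∫ z in ball (0 : EuclideanSpace ℝ (Fin n)) ρ ∩ H, ‖z + r • e‖ ^ (-a) := by
      rw [hint, ← mul_assoc, mul_inv_cancel₀ hrn.ne', one_mul]
    rw [← this, ← mul_assoc, hrp]
  refine ⟨J 1, C, hcpos, hJle 1, fun ρ r hρ hr hrρ => ?_⟩
  have hrp : (0 : ℝ) < r ^ ((n : ℝ) - a) := Real.rpow_pos_of_pos hr _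
  have h1t : (1 : ℝ) ≤ ρ / r := (one_le_div hr).mpr hrρ
  rw [key ρ r hr]
  constructor
  · rw [mul_comm]
    exact mul_le_mul_of_nonneg_left (hJmono 1 (ρ / r) h1t) hrp.le
  · rw [mul_comm (r ^ ((n : ℝ) - a))]
    exact mul_le_mul_of_nonneg_right (hJle (ρ / r)) hrp.le

theorem stmt_1 (n : ℕ) (hn : 1 ≤ n) (a : ℝ) (ha : (n : ℝ) < a) :
    ∃ c C : ℝ, 0 < c ∧ c ≤ C ∧ ∀ ρ r : ℝ, 0 < ρ → 0 < r → r ≤ ρ →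
      c * r ^ ((n : ℝ) - a) ≤
        (∫ z in Metric.ball (0 : EuclideanSpace ℝ (Fin n)) ρ ∩
            {z : EuclideanSpace ℝ (Fin n) | 0 < z ⟨n - 1, by omega⟩},
          ‖z + r • EuclideanSpace.single (⟨n - 1, by omega⟩ : Fin n) (1 : ℝ)‖ ^ (-a)) ∧
      (∫ z in Metric.ball (0 : EuclideanSpace ℝ (Fin n)) ρ ∩
            {z : EuclideanSpace ℝ (Fin n) | 0 < z ⟨n - 1, by omega⟩},
          ‖z + r • EuclideanSpace.single (⟨n - 1, by omega⟩ : Fin n) (1 : ℝ)‖ ^ (-a)) ≤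
        C * r ^ ((n : ℝ) - a) := by
  exact aux_halfball n ⟨n - 1, by omega⟩ a ha
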